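/- arXiv:2510.16097 — 5 statements merged into one kernel-verified Lean document; each statement's English description precedes it below -/
import Mathlib

section
/- Let g be the half-normal density with parameter σ > 0, i.e., g(y) = (√2/(σ√π))·exp(−y²/(2σ²)) for y ≥ 0 and g(y) = 0 for y < 0. For any δ ≥ 0, ∫₀^∞ |g(y + δ) − g(y)| dy ≤ δ·√2/(σ√π). -/
open Real MeasureTheory

/-- Shift bound for the half-normal density: for `δ ≥ 0`,
`∫₀^∞ |g(y+δ) − g(y)| dy ≤ δ·√2/(σ√π)`. -/
theorem halfnormal_shift_bound (σ : ℝ) (hσ : 0 < σ) (δ : ℝ) (hδ : 0 ≤ δ)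
    (g : ℝ → ℝ)
    (hg : ∀ y : ℝ, g y =
      if 0 ≤ y then Real.sqrt 2 / (σ * Real.sqrt π) * Real.exp (-(y ^ 2) / (2 * σ ^ 2)) else 0) :
    ∫ y in Set.Ioi (0 : ℝ), |g (y + δ) - g y| ≤ δ * (Real.sqrt 2 / (σ * Real.sqrt π)) := by
  set c : ℝ := Real.sqrt 2 / (σ * Real.sqrt π) with hc_def
  have hc : 0 < c := by
    apply div_pos (Real.sqrt_pos.2 (by norm_num))
    exact mul_pos hσ (Real.sqrt_pos.2 Real.pi_pos)
  set f : ℝ → ℝ := fun y => c * Real.exp (-(y ^ 2) / (2 * σ ^ 2)) with hf_def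
  have hf_int : Integrable f := by
    have h := (integrable_exp_neg_mul_sq (show (0:ℝ) < 1 / (2 * σ ^ 2) by positivity)).const_mul c
    refine h.congr (Filter.Eventually.of_forall fun y => ?_)
    simp only [hf_def]
    ring_nf
  have hgf : g = (Set.Ici (0:ℝ)).indicator f := by
    funext y
    rw [hg y]
    by_cases h : 0 ≤ y <;> simp [Set.indicator, h, hf_def]
  have hg_int : Integrable g := by
    rw [hgf]; exact hf_int.indicator measurableSet_Ici
  have hg_nonneg : ∀ y, 0 ≤ g y := by
    intro y; rw [hg y]
    split
    · positivity
    · exact le_rfl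
  have hg_le_c : ∀ y, g y ≤ c := by
    intro y; rw [hg y]
    split
    · calc c * Real.exp (-(y ^ 2) / (2 * σ ^ 2)) ≤ c * 1 := by
            apply mul_le_mul_of_nonneg_left _ hc.le
            rw [Real.exp_le_one_iff]
            exact div_nonpos_of_nonpos_of_nonneg (neg_nonpos.2 (sq_nonneg y)) (by positivity)
          _ = c := mul_one c
    · exact hc.le
  have hanti : ∀ a b : ℝ, 0 ≤ a → a ≤ b → g b ≤ g a := by
    intro a b ha hab
    rw [hg a, hg b, if_pos ha, if_pos (ha.trans hab)]
    apply mul_le_mul_of_nonneg_left _ hc.le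
    apply Real.exp_le_exp.2
    have hσ2 : (0:ℝ) < 2 * σ ^ 2 := by positivity
    rw [div_le_div_iff₀ hσ2 hσ2]
    nlinarith [mul_le_mul_of_nonneg_right (show a ^ 2 ≤ b ^ 2 by nlinarith) hσ2.le]
  have hshift_int : Integrable (fun y => g (y + δ)) := hg_int.comp_add_right δ
  -- rewrite abs
  have h1 : ∫ y in Set.Ioi (0:ℝ), |g (y + δ) - g y| =
      ∫ y in Set.Ioi (0:ℝ), (g y - g (y + δ)) := by
    apply setIntegral_congr_fun measurableSet_Ioi
    intro y hy
    have hle : g (y + δ) ≤ g y := hanti y (y + δ) (le_of_lt hy) (by linarith)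
    show |g (y + δ) - g y| = g y - g (y + δ)
    rw [abs_of_nonpos (by linarith), neg_sub]
  rw [h1]
  rw [integral_sub hg_int.integrableOn hshift_int.integrableOn]
  have hshift : ∫ y in Set.Ioi (0:ℝ), g (y + δ) = ∫ y in Set.Ioi δ, g y := by
    rw [← integral_indicator measurableSet_Ioi, ← integral_indicator measurableSet_Ioi,
      ← integral_add_right_eq_self (fun y => (Set.Ioi δ).indicator g y) δ]
    congr 1
    funext y
    by_cases h : 0 < y
    · have h2 : δ < y + δ := by linarith
      simp [Set.indicator, h, h2]
    · have h2 : ¬ δ < y + δ := by push_neg at h ⊢; linarith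
      simp [Set.indicator, h, h2]
  rw [hshift]
  have hsplit : ∫ y in Set.Ioi (0:ℝ), g y =
      (∫ y in Set.Ioc 0 δ, g y) + ∫ y in Set.Ioi δ, g y := by
    rw [← setIntegral_union (Set.Ioc_disjoint_Ioi le_rfl) measurableSet_Ioi
      hg_int.integrableOn hg_int.integrableOn,
      Set.Ioc_union_Ioi_eq_Ioi hδ]
  rw [hsplit]
  have hbound : ∫ y in Set.Ioc (0:ℝ) δ, g y ≤ δ * c := by
    have key := norm_setIntegral_le_of_norm_le_const (μ := volume) (s := Set.Ioc (0:ℝ) δ)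
      (C := c) (by rw [Real.volume_Ioc]; exact ENNReal.ofReal_lt_top)
      (fun x _ => by rw [Real.norm_eq_abs, abs_of_nonneg (hg_nonneg x)]; exact hg_le_c x)
    calc ∫ y in Set.Ioc (0:ℝ) δ, g y ≤ |∫ y in Set.Ioc (0:ℝ) δ, g y| := le_abs_self _
      _ ≤ c * (volume (Set.Ioc (0:ℝ) δ)).toReal := key
      _ = δ * c := by rw [Real.volume_Ioc, ENNReal.toReal_ofReal (by linarith)]; ring
  linarith [hbound]
end

section
/- Let g be the half-normal density with parameter σ > 0 (g(y) = (√2/(σ√π))·exp(−y²/(2σ²)) for y ≥ 0, g(y) = 0 for y < 0). For any 0 ≤ ε ≤ ε' ≤ 1, ∫₀^∞ |g(x − ε) − g(x − ε')| dx ≤ (2√2/(σ√π))·(ε' − ε). -/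
open Real MeasureTheory

lemma shift_Ioi_integral (f : ℝ → ℝ) (a c : ℝ) :
    ∫ x in Set.Ioi a, f (x - c) = ∫ x in Set.Ioi (a - c), f x := by
  rw [← MeasureTheory.integral_indicator measurableSet_Ioi,
      ← MeasureTheory.integral_indicator measurableSet_Ioi]
  have h : (fun x => (Set.Ioi a).indicator (fun y => f (y - c)) x)
      = fun x => (Set.Ioi (a - c)).indicator f (x - c) := by
    funext x
    simp only [Set.indicator_apply, Set.mem_Ioi, sub_lt_sub_iff_right]
  rw [h, integral_sub_right_eq_self (fun x => (Set.Ioi (a - c)).indicator f x) c]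

/-- For `0 ≤ ε ≤ ε' ≤ 1`, the `L¹` distance over `[0,∞)` of two shifted
half-normal densities is bounded by `(2√2/(σ√π))·(ε' − ε)`. -/
theorem halfnormal_two_shift_bound (σ : ℝ) (hσ : 0 < σ) (ε ε' : ℝ)
    (hε : 0 ≤ ε) (hεε' : ε ≤ ε') (hε' : ε' ≤ 1)
    (g : ℝ → ℝ)
    (hg : ∀ y : ℝ, g y =
      if 0 ≤ y then Real.sqrt 2 / (σ * Real.sqrt π) * Real.exp (-(y ^ 2) / (2 * σ ^ 2)) else 0) :
    ∫ x in Set.Ioi (0 : ℝ), |g (x - ε) - g (x - ε')| ≤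
      2 * Real.sqrt 2 / (σ * Real.sqrt π) * (ε' - ε) := by
  set c : ℝ := Real.sqrt 2 / (σ * Real.sqrt π) with hc
  have hcpos : 0 < c := by
    apply div_pos (Real.sqrt_pos.2 (by norm_num))
    exact mul_pos hσ (Real.sqrt_pos.2 Real.pi_pos)
  set φ : ℝ → ℝ := fun y => c * Real.exp (-(y ^ 2) / (2 * σ ^ 2)) with hφ
  have hφpos : ∀ y, 0 ≤ φ y := fun y => le_of_lt (mul_pos hcpos (Real.exp_pos _))
  have hφle : ∀ y, φ y ≤ c := by
    intro y
    have h1 : Real.exp (-(y ^ 2) / (2 * σ ^ 2)) ≤ 1 := by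
      apply Real.exp_le_one_iff.2
      apply div_nonpos_of_nonpos_of_nonneg (neg_nonpos.2 (by positivity)) (by positivity)
    calc φ y = c * Real.exp (-(y ^ 2) / (2 * σ ^ 2)) := rfl
      _ ≤ c * 1 := mul_le_mul_of_nonneg_left h1 hcpos.le
      _ = c := mul_one c
  have hφanti : ∀ ⦃a b : ℝ⦄, 0 ≤ a → a ≤ b → φ b ≤ φ a := by
    intro a b ha hab
    apply mul_le_mul_of_nonneg_left _ hcpos.le
    apply Real.exp_le_exp.2
    apply div_le_div_of_nonneg_right _ (by positivity)
    · have : a ^ 2 ≤ b ^ 2 := by nlinarith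
      linarith
  have hφint : Integrable φ := by
    have h0 : (0 : ℝ) < 1 / (2 * σ ^ 2) := by positivity
    have := (integrable_exp_neg_mul_sq h0).const_mul c
    convert this using 2 with y
    rw [hφ]
    ring_nf
  have hgind : g = (Set.Ici (0 : ℝ)).indicator φ := by
    funext y
    rw [hg y, Set.indicator_apply]
    simp only [Set.mem_Ici, hφ]
  have hgint : Integrable g := by
    rw [hgind]; exact hφint.indicator measurableSet_Ici
  have hg0 : ∀ y, 0 ≤ g y := by
    intro y; rw [hg y]; split
    · exact hφpos y
    · exact le_refl 0
  have hgc : ∀ y, g y ≤ c := by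
    intro y; rw [hg y]; split
    · exact hφle y
    · exact hcpos.le
  have hgneg : ∀ y : ℝ, y < 0 → g y = 0 := by
    intro y hy; rw [hg y, if_neg (not_le.2 hy)]
  have hgpos : ∀ y : ℝ, 0 ≤ y → g y = φ y := by
    intro y hy; rw [hg y, if_pos hy]
  -- the integrand
  set h : ℝ → ℝ := fun x => |g (x - ε) - g (x - ε')| with hh
  have hhint : Integrable h := ((hgint.comp_sub_right ε).sub (hgint.comp_sub_right ε')).abs
  have hhc : ∀ x, h x ≤ c := by
    intro x
    rw [hh]
    rw [abs_sub_le_iff]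
    constructor <;> [skip; skip] <;>
      · have := hg0 (x - ε); have := hg0 (x - ε'); have := hgc (x - ε); have := hgc (x - ε')
        linarith
  have hh0 : ∀ x, 0 ≤ h x := fun x => abs_nonneg _
  -- Split Ioi 0 = Ioc 0 ε' ∪ Ioi ε'
  have hsplit : ∫ x in Set.Ioi (0 : ℝ), h x
      = (∫ x in Set.Ioc (0 : ℝ) ε', h x) + ∫ x in Set.Ioi ε', h x := by
    rw [← MeasureTheory.setIntegral_union (Set.Ioc_disjoint_Ioi le_rfl) measurableSet_Ioi
      hhint.integrableOn hhint.integrableOn,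
      Set.Ioc_union_Ioi_eq_Ioi (le_trans hε hεε')]
  -- bound on Ioc 0 ε'
  have hbd1 : ∫ x in Set.Ioc (0 : ℝ) ε', h x ≤ c * (ε' - ε) := by
    have hsplit2 : ∫ x in Set.Ioc (0 : ℝ) ε', h x
        = (∫ x in Set.Ioc (0 : ℝ) ε, h x) + ∫ x in Set.Ioc ε ε', h x := by
      rw [← MeasureTheory.setIntegral_union (Set.Ioc_disjoint_Ioc_of_le le_rfl) measurableSet_Ioc
        hhint.integrableOn hhint.integrableOn, Set.Ioc_union_Ioc_eq_Ioc hε hεε']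
    have hz : ∫ x in Set.Ioc (0 : ℝ) ε, h x = 0 := by
      rw [MeasureTheory.integral_Ioc_eq_integral_Ioo]
      apply MeasureTheory.setIntegral_eq_zero_of_forall_eq_zero
      intro x hx
      obtain ⟨hx1, hx2⟩ := hx
      show |g (x - ε) - g (x - ε')| = 0
      rw [hgneg (x - ε) (by linarith), hgneg (x - ε') (by linarith)]
      simp
    have hb : ∫ x in Set.Ioc ε ε', h x ≤ c * (ε' - ε) := by
      calc ∫ x in Set.Ioc ε ε', h x ≤ ‖∫ x in Set.Ioc ε ε', h x‖ := le_abs_self _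
        _ ≤ c * (volume (Set.Ioc ε ε')).toReal := by
            apply MeasureTheory.norm_setIntegral_le_of_norm_le_const
            · rw [Real.volume_Ioc]; exact ENNReal.ofReal_lt_top
            · intro x _
              rw [Real.norm_eq_abs, abs_of_nonneg (hh0 x)]
              exact hhc x
        _ = c * (ε' - ε) := by
            rw [Real.volume_Ioc, ENNReal.toReal_ofReal (by linarith)]
    rw [hsplit2, hz, zero_add]
    exact hb
  -- bound on Ioi ε'
  have hbd2 : ∫ x in Set.Ioi ε', h x ≤ c * (ε' - ε) := by
    have heq : ∀ x ∈ Set.Ioi ε', h x = φ (x - ε') - φ (x - ε) := by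
      intro x hx
      rw [Set.mem_Ioi] at hx
      show |g (x - ε) - g (x - ε')| = φ (x - ε') - φ (x - ε)
      rw [hgpos (x - ε') (by linarith), hgpos (x - ε) (by linarith)]
      rw [abs_sub_comm, abs_of_nonneg]
      have := hφanti (show (0:ℝ) ≤ x - ε' by linarith) (show x - ε' ≤ x - ε by linarith)
      linarith
    rw [MeasureTheory.setIntegral_congr_fun measurableSet_Ioi heq]
    have hintε' : IntegrableOn (fun x => φ (x - ε')) (Set.Ioi ε') :=
      (hφint.comp_sub_right ε').integrableOn
    have hintε : IntegrableOn (fun x => φ (x - ε)) (Set.Ioi ε') :=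
      (hφint.comp_sub_right ε).integrableOn
    rw [MeasureTheory.integral_sub hintε' hintε]
    rw [shift_Ioi_integral φ ε' ε', shift_Ioi_integral φ ε' ε, sub_self]
    have hsplit3 : ∫ x in Set.Ioi (0 : ℝ), φ x
        = (∫ x in Set.Ioc (0 : ℝ) (ε' - ε), φ x) + ∫ x in Set.Ioi (ε' - ε), φ x := by
      rw [← MeasureTheory.setIntegral_union (Set.Ioc_disjoint_Ioi le_rfl) measurableSet_Ioi
        hφint.integrableOn hφint.integrableOn,
        Set.Ioc_union_Ioi_eq_Ioi (by linarith)]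
    rw [hsplit3, add_sub_cancel_right]
    calc ∫ x in Set.Ioc (0 : ℝ) (ε' - ε), φ x
        ≤ ‖∫ x in Set.Ioc (0 : ℝ) (ε' - ε), φ x‖ := le_abs_self _
      _ ≤ c * (volume (Set.Ioc (0 : ℝ) (ε' - ε))).toReal := by
          apply MeasureTheory.norm_setIntegral_le_of_norm_le_const
          · rw [Real.volume_Ioc]; exact ENNReal.ofReal_lt_top
          · intro x _
            rw [Real.norm_eq_abs, abs_of_nonneg (hφpos x)]
            exact hφle x
      _ = c * (ε' - ε) := by
          rw [Real.volume_Ioc, sub_zero, ENNReal.toReal_ofReal (by linarith)]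
  calc ∫ x in Set.Ioi (0 : ℝ), h x
      = (∫ x in Set.Ioc (0 : ℝ) ε', h x) + ∫ x in Set.Ioi ε', h x := hsplit
    _ ≤ c * (ε' - ε) + c * (ε' - ε) := add_le_add hbd1 hbd2
    _ = 2 * Real.sqrt 2 / (σ * Real.sqrt π) * (ε' - ε) := by rw [hc]; ring
end

section
/- Let W be a half-normal random variable with parameter σ > 0 (i.e., W = |X| with X ~ N(0,σ²)). Let −∞ ≤ Δ₁ ≤ Δ₂ ≤ ... ≤ Δ_{m+1} = +∞ be an increasing sequence of extended reals with Δ₁ = 0. For ε ∈ [0,1] define pᵢ(ε) = P[Δᵢ − ε ≤ W < Δ_{i+1} − ε] for i = 1,...,m. Then for any ε, ε' ∈ [0,1], ∑_{i=1}^m |pᵢ(ε) − pᵢ(ε')| ≤ (2√2/(σ√π))·|ε − ε'|. -/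
open Real MeasureTheory ProbabilityTheory

namespace HNTV

lemma sum_abs_tele (G : ℕ → ℝ) (m k : ℕ) (hkm : k < m) (M : ℝ)
    (h0 : G 0 = 0) (hGm : G m = 0)
    (hup : ∀ n, n < k → G n ≤ G (n + 1))
    (hdown : ∀ n, k < n → n < m → G (n + 1) ≤ G n)
    (hMk : G k ≤ M) (hMk1 : G (k + 1) ≤ M) :
    ∑ n ∈ Finset.range m, |G (n + 1) - G n| ≤ 2 * M := by
  have h1 : ∑ n ∈ Finset.Ico 0 k, |G (n + 1) - G n| + ∑ n ∈ Finset.Ico k m, |G (n + 1) - G n|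
      = ∑ n ∈ Finset.range m, |G (n + 1) - G n| := by
    rw [Finset.sum_Ico_consecutive _ (Nat.zero_le k) hkm.le, Finset.range_eq_Ico]
  have h2 : ∑ n ∈ Finset.Ico k m, |G (n + 1) - G n|
      = |G (k + 1) - G k| + ∑ n ∈ Finset.Ico (k + 1) m, |G (n + 1) - G n| :=
    Finset.sum_eq_sum_Ico_succ_bot hkm _
  have h3 : ∑ n ∈ Finset.Ico 0 k, |G (n + 1) - G n| = G k := by
    rw [← Finset.range_eq_Ico]
    have he : ∀ n ∈ Finset.range k, |G (n + 1) - G n| = G (n + 1) - G n := fun n hn =>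
      abs_of_nonneg (sub_nonneg.mpr (hup n (Finset.mem_range.mp hn)))
    rw [Finset.sum_congr rfl he, Finset.sum_range_sub, h0, sub_zero]
  have h4 : ∑ n ∈ Finset.Ico (k + 1) m, |G (n + 1) - G n| = G (k + 1) := by
    have he : ∀ n ∈ Finset.Ico (k + 1) m, |G (n + 1) - G n| = G n - G (n + 1) := by
      intro n hn
      rw [Finset.mem_Ico] at hn
      rw [abs_sub_comm]
      exact abs_of_nonneg (sub_nonneg.mpr (hdown n (by omega) hn.2))
    rw [Finset.sum_congr rfl he, Finset.sum_Ico_eq_sum_range]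
    have he2 : ∀ i ∈ Finset.range (m - (k + 1)),
        G (k + 1 + i) - G (k + 1 + i + 1)
          = (fun j => G (k + 1 + j)) i - (fun j => G (k + 1 + j)) (i + 1) := by
      intro i _
      simp only [← Nat.add_assoc]
    rw [Finset.sum_congr rfl he2, Finset.sum_range_sub' (fun j => G (k + 1 + j))]
    have hm' : k + 1 + (m - (k + 1)) = m := by omega
    simp only [Nat.add_zero, hm', hGm, sub_zero]
  have h5 : |G (k + 1) - G k| ≤ 2 * M - G k - G (k + 1) :=
    abs_le.mpr ⟨by linarith, by linarith⟩
  linarith [h1, h2, h3, h4, h5]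

variable {v : NNReal}

lemma pdf_anti {x c : ℝ} (hx : 0 ≤ x) (hc : 0 ≤ c) :
    gaussianPDFReal 0 v (x + c) ≤ gaussianPDFReal 0 v x := by
  unfold gaussianPDFReal
  refine mul_le_mul_of_nonneg_left ?_ (by positivity)
  refine Real.exp_le_exp.mpr (div_le_div_of_nonneg_right ?_ (by positivity))
  nlinarith

lemma pdf_le_max (x : ℝ) : gaussianPDFReal 0 v x ≤ (Real.sqrt (2 * π * v))⁻¹ := by
  unfold gaussianPDFReal
  nth_rewrite 2 [← mul_one (Real.sqrt (2 * π * v))⁻¹]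
  refine mul_le_mul_of_nonneg_left ?_ (by positivity)
  refine Real.exp_le_one_iff.mpr (div_nonpos_of_nonpos_of_nonneg ?_ (by positivity))
  simp [sq_nonneg]

lemma I_nonneg {a b : ℝ} (hab : a ≤ b) : 0 ≤ ∫ x in a..b, gaussianPDFReal 0 v x :=
  intervalIntegral.integral_nonneg hab (fun x _ => gaussianPDFReal_nonneg _ _ _)

lemma I_mono {t s δ : ℝ} (ht : 0 ≤ t) (hts : t ≤ s) (hδ : 0 ≤ δ) :
    ∫ x in s..(s + δ), gaussianPDFReal 0 v x ≤ ∫ x in t..(t + δ), gaussianPDFReal 0 v x := by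
  have key : ∫ x in s..(s + δ), gaussianPDFReal 0 v x
      = ∫ x in t..(t + δ), gaussianPDFReal 0 v (x + (s - t)) := by
    rw [intervalIntegral.integral_comp_add_right]
    congr 1 <;> ring
  rw [key]
  refine intervalIntegral.integral_mono_on (by linarith)
    (((integrable_gaussianPDFReal 0 v).comp_add_right (s - t)).intervalIntegrable)
    ((integrable_gaussianPDFReal 0 v).intervalIntegrable) ?_
  intro x hx
  exact pdf_anti (le_trans ht hx.1) (by linarith)

lemma I_le_const {t δ : ℝ} (hδ : 0 ≤ δ) :
    ∫ x in t..(t + δ), gaussianPDFReal 0 v x ≤ δ * (Real.sqrt (2 * π * v))⁻¹ := by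
  have h := intervalIntegral.integral_mono_on (a := t) (b := t + δ) (μ := volume)
    (by linarith) ((integrable_gaussianPDFReal 0 v).intervalIntegrable)
    intervalIntegrable_const (g := fun _ => (Real.sqrt (2 * π * v))⁻¹)
    (fun x _ => pdf_le_max x)
  rwa [intervalIntegral.integral_const, add_sub_cancel_left, smul_eq_mul] at h
lemma pdf_symm (x : ℝ) : gaussianPDFReal 0 v (-x) = gaussianPDFReal 0 v x := by
  simp [gaussianPDFReal, neg_sq]

lemma meas_Icc (hv0 : v ≠ 0) {a b : ℝ} (hab : a ≤ b) :
    gaussianReal 0 v (Set.Icc a b) = ENNReal.ofReal (∫ x in a..b, gaussianPDFReal 0 v x) := by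
  rw [gaussianReal_apply_eq_integral 0 hv0, intervalIntegral.integral_of_le hab,
    integral_Icc_eq_integral_Ioc]

lemma meas_Ico (hv0 : v ≠ 0) {a b : ℝ} (hab : a ≤ b) :
    gaussianReal 0 v (Set.Ico a b) = ENNReal.ofReal (∫ x in a..b, gaussianPDFReal 0 v x) := by
  rw [gaussianReal_apply_eq_integral 0 hv0, intervalIntegral.integral_of_le hab,
    integral_Ico_eq_integral_Ioo, integral_Ioc_eq_integral_Ioo]

lemma meas_Ioo (hv0 : v ≠ 0) {a b : ℝ} (hab : a ≤ b) :
    gaussianReal 0 v (Set.Ioo a b) = ENNReal.ofReal (∫ x in a..b, gaussianPDFReal 0 v x) := by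
  rw [gaussianReal_apply_eq_integral 0 hv0, intervalIntegral.integral_of_le hab,
    integral_Ioc_eq_integral_Ioo]

lemma int_neg_interval {a b : ℝ} :
    ∫ x in (-b)..(-a), gaussianPDFReal 0 v x = ∫ x in a..b, gaussianPDFReal 0 v x := by
  rw [← intervalIntegral.integral_comp_neg (gaussianPDFReal 0 v)]
  simp only [pdf_symm]

/-- the annulus `{x | s ≤ |x| < s + δ}` -/
def Eset (s δ : ℝ) : Set ℝ := {x : ℝ | s ≤ |x| ∧ |x| < s + δ}

lemma E_upper (hv0 : v ≠ 0) {s δ : ℝ} (hs : 0 ≤ s) (hδ : 0 ≤ δ) :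
    gaussianReal 0 v (Eset s δ)
      ≤ ENNReal.ofReal (2 * ∫ x in s..(s + δ), gaussianPDFReal 0 v x) := by
  have hsub : Eset s δ ⊆ Set.Icc s (s + δ) ∪ Set.Icc (-(s + δ)) (-s) := by
    intro x hx
    obtain ⟨h1, h2⟩ := hx
    rcases le_or_gt 0 x with h | h
    · left; rw [abs_of_nonneg h] at h1 h2; exact ⟨h1, h2.le⟩
    · right; rw [abs_of_neg h] at h1 h2; constructor <;> linarith
  refine (measure_mono hsub).trans ((measure_union_le _ _).trans ?_)
  rw [meas_Icc hv0 (by linarith), meas_Icc hv0 (by linarith : -(s + δ) ≤ -s),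
    int_neg_interval, ← ENNReal.ofReal_add (I_nonneg (by linarith)) (I_nonneg (by linarith))]
  exact ENNReal.ofReal_le_ofReal (by linarith)

lemma E_lower (hv0 : v ≠ 0) {s δ : ℝ} (hs : 0 ≤ s) (hδ : 0 ≤ δ) :
    ENNReal.ofReal (2 * ∫ x in s..(s + δ), gaussianPDFReal 0 v x)
      ≤ gaussianReal 0 v (Eset s δ) := by
  have hsub : Set.Ico s (s + δ) ∪ Set.Ioo (-(s + δ)) (-s) ⊆ Eset s δ := by
    rintro x (hx | hx)
    · obtain ⟨h1, h2⟩ := hx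
      have hx0 : 0 ≤ x := le_trans hs h1
      rw [Eset, Set.mem_setOf_eq, abs_of_nonneg hx0]; exact ⟨h1, h2⟩
    · obtain ⟨h1, h2⟩ := hx
      have hx0 : x < 0 := by linarith
      rw [Eset, Set.mem_setOf_eq, abs_of_neg hx0]; constructor <;> linarith
  have hdisj : Disjoint (Set.Ico s (s + δ)) (Set.Ioo (-(s + δ)) (-s)) := by
    rw [Set.disjoint_left]
    rintro x ⟨h1, _⟩ ⟨_, h4⟩
    linarith
  calc ENNReal.ofReal (2 * ∫ x in s..(s + δ), gaussianPDFReal 0 v x)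
      = ENNReal.ofReal (∫ x in s..(s + δ), gaussianPDFReal 0 v x)
        + ENNReal.ofReal (∫ x in s..(s + δ), gaussianPDFReal 0 v x) := by
        rw [← ENNReal.ofReal_add (I_nonneg (by linarith)) (I_nonneg (by linarith))]
        congr 1; ring
    _ = gaussianReal 0 v (Set.Ico s (s + δ)) + gaussianReal 0 v (Set.Ioo (-(s + δ)) (-s)) := by
        rw [meas_Ico hv0 (by linarith), meas_Ioo hv0 (by linarith : -(s + δ) ≤ -s),
          int_neg_interval]
    _ = gaussianReal 0 v (Set.Ico s (s + δ) ∪ Set.Ioo (-(s + δ)) (-s)) :=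
        (measure_union hdisj measurableSet_Ioo).symm
    _ ≤ gaussianReal 0 v (Eset s δ) := measure_mono hsub

lemma E_mono (hv0 : v ≠ 0) {t s δ : ℝ} (ht : 0 ≤ t) (hts : t ≤ s) (hδ : 0 ≤ δ) :
    gaussianReal 0 v (Eset s δ) ≤ gaussianReal 0 v (Eset t δ) :=
  (E_upper hv0 (le_trans ht hts) hδ).trans
    ((ENNReal.ofReal_le_ofReal (by linarith [I_mono (v := v) ht hts hδ])).trans
      (E_lower hv0 ht hδ))

lemma E_bound (hv0 : v ≠ 0) {s δ : ℝ} (hs : 0 ≤ s) (hδ : 0 ≤ δ) :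
    gaussianReal 0 v (Eset s δ) ≤ ENNReal.ofReal (2 * (δ * (Real.sqrt (2 * π * v))⁻¹)) := by
  refine (E_upper hv0 hs hδ).trans (ENNReal.ofReal_le_ofReal ?_)
  have h1 := I_mono (v := v) (le_refl (0:ℝ)) hs hδ
  have h2 := I_le_const (v := v) (t := 0) hδ
  linarith

lemma ball_bound (hv0 : v ≠ 0) {δ : ℝ} (hδ : 0 ≤ δ) :
    gaussianReal 0 v (Set.Ioo (-δ) δ) ≤ ENNReal.ofReal (2 * (δ * (Real.sqrt (2 * π * v))⁻¹)) := by
  rw [meas_Ioo hv0 (by linarith : -δ ≤ δ)]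
  refine ENNReal.ofReal_le_ofReal ?_
  have h := intervalIntegral.integral_mono_on (a := -δ) (b := δ) (μ := volume)
    (by linarith) ((integrable_gaussianPDFReal 0 v).intervalIntegrable)
    intervalIntegrable_const (g := fun _ => (Real.sqrt (2 * π * v))⁻¹)
    (fun x _ => pdf_le_max x)
  rw [intervalIntegral.integral_const, smul_eq_mul] at h
  calc ∫ x in (-δ)..δ, gaussianPDFReal 0 v x ≤ (δ - -δ) * (Real.sqrt (2 * π * v))⁻¹ := h
    _ = 2 * (δ * (Real.sqrt (2 * π * v))⁻¹) := by ring

lemma Smeas (a : EReal) (t : ℝ) :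
    MeasurableSet {x : ℝ | ((|x| + t : ℝ) : EReal) < a} :=
  measurableSet_lt (measurable_coe_real_ereal.comp (measurable_abs.add_const t)) measurable_const

theorem aux (σ : ℝ) (hσ : 0 < σ) (m : ℕ) (Δ : Fin (m + 1) → EReal) (hmono : Monotone Δ)
    (h0 : Δ 0 = 0) (htop : Δ (Fin.last m) = ⊤)
    (v : NNReal) (hv : (v : ℝ) = σ ^ 2)
    (ε ε' : ℝ) (hε0 : 0 ≤ ε) (hee : ε ≤ ε') :
    ∑ i : Fin m,
      |((gaussianReal 0 v) {x : ℝ | Δ i.castSucc ≤ ((|x| + ε : ℝ) : EReal) ∧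
          ((|x| + ε : ℝ) : EReal) < Δ i.succ}).toReal -
        ((gaussianReal 0 v) {x : ℝ | Δ i.castSucc ≤ ((|x| + ε' : ℝ) : EReal) ∧
          ((|x| + ε' : ℝ) : EReal) < Δ i.succ}).toReal|
      ≤ 2 * (Real.sqrt 2 / (σ * Real.sqrt π) * (ε' - ε)) := by
  classical
  have hε'0 : 0 ≤ ε' := le_trans hε0 hee
  have hδ : (0:ℝ) ≤ ε' - ε := by linarith
  have hv0 : v ≠ 0 := by
    intro h; rw [h] at hv; simp at hv; nlinarith
  set μ := gaussianReal 0 v with hμ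
  set FF : Fin (m + 1) → ℝ := fun j =>
    (μ ({x : ℝ | ((|x| + ε : ℝ) : EReal) < Δ j} \
        {x : ℝ | ((|x| + ε' : ℝ) : EReal) < Δ j})).toReal with hFF
  have hSsub : ∀ (a : EReal),
      {x : ℝ | ((|x| + ε' : ℝ) : EReal) < a} ⊆ {x : ℝ | ((|x| + ε : ℝ) : EReal) < a} :=
    fun a x hx => lt_of_le_of_lt (EReal.coe_le_coe_iff.mpr (by linarith)) hx
  have hSmono : ∀ (t : ℝ) {a b : EReal}, a ≤ b →
      {x : ℝ | ((|x| + t : ℝ) : EReal) < a} ⊆ {x : ℝ | ((|x| + t : ℝ) : EReal) < b} :=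
    fun t a b hab x hx => lt_of_lt_of_le hx hab
  have hdiffre : ∀ (A B : Set ℝ), A ⊆ B → MeasurableSet A →
      (μ (B \ A)).toReal = (μ B).toReal - (μ A).toReal := by
    intro A B hAB mA
    rw [measure_diff hAB mA.nullMeasurableSet (measure_ne_top μ A),
      ENNReal.toReal_sub_of_le (measure_mono hAB) (measure_ne_top μ B)]
  have hFFdiff : ∀ j, FF j = (μ {x : ℝ | ((|x| + ε : ℝ) : EReal) < Δ j}).toReal
      - (μ {x : ℝ | ((|x| + ε' : ℝ) : EReal) < Δ j}).toReal :=
    fun j => hdiffre _ _ (hSsub _) (Smeas _ _)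
  have hsett : ∀ (t : ℝ) (i : Fin m),
      {x : ℝ | Δ i.castSucc ≤ ((|x| + t : ℝ) : EReal) ∧ ((|x| + t : ℝ) : EReal) < Δ i.succ}
        = {x : ℝ | ((|x| + t : ℝ) : EReal) < Δ i.succ} \
          {x : ℝ | ((|x| + t : ℝ) : EReal) < Δ i.castSucc} := by
    intro t i; ext x
    simp only [Set.mem_setOf_eq, Set.mem_diff, not_lt]
    exact and_comm
  have hterm : ∀ i : Fin m,
      (μ {x : ℝ | Δ i.castSucc ≤ ((|x| + ε : ℝ) : EReal) ∧
          ((|x| + ε : ℝ) : EReal) < Δ i.succ}).toReal -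
        (μ {x : ℝ | Δ i.castSucc ≤ ((|x| + ε' : ℝ) : EReal) ∧
          ((|x| + ε' : ℝ) : EReal) < Δ i.succ}).toReal
      = FF i.succ - FF i.castSucc := by
    intro i
    rw [hsett ε i, hsett ε' i,
      hdiffre _ _ (hSmono ε (hmono (Fin.castSucc_le_succ i))) (Smeas _ _),
      hdiffre _ _ (hSmono ε' (hmono (Fin.castSucc_le_succ i))) (Smeas _ _),
      hFFdiff i.succ, hFFdiff i.castSucc]
    ring
  set M : ℝ := Real.sqrt 2 / (σ * Real.sqrt π) * (ε' - ε) with hM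
  have hM0 : 0 ≤ M :=
    mul_nonneg (div_nonneg (Real.sqrt_nonneg 2) (mul_nonneg hσ.le (Real.sqrt_nonneg π))) hδ
  have hconst : 2 * ((ε' - ε) * (Real.sqrt (2 * π * (v:ℝ)))⁻¹) = M := by
    rw [hM, hv, Real.sqrt_mul (by positivity) (σ ^ 2), Real.sqrt_sq hσ.le,
      Real.sqrt_mul (by norm_num) π]
    have h2 : Real.sqrt 2 * Real.sqrt 2 = 2 := Real.mul_self_sqrt (by norm_num)
    have hπ : (0:ℝ) < Real.sqrt π := Real.sqrt_pos.mpr Real.pi_pos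
    have hs2 : (0:ℝ) < Real.sqrt 2 := Real.sqrt_pos.mpr (by norm_num)
    field_simp
    linear_combination (-(ε' - ε)) * (Real.sq_sqrt (by norm_num : (0:ℝ) ≤ 2))
  have hreal : ∀ ar : ℝ,
      {x : ℝ | ((|x| + ε : ℝ) : EReal) < ((ar : ℝ) : EReal)} \
        {x : ℝ | ((|x| + ε' : ℝ) : EReal) < ((ar : ℝ) : EReal)}
      = {x : ℝ | ar - ε' ≤ |x| ∧ |x| < ar - ε} := by
    intro ar; ext x
    simp only [Set.mem_diff, Set.mem_setOf_eq, not_lt, EReal.coe_lt_coe_iff,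
      EReal.coe_le_coe_iff]
    constructor
    · rintro ⟨h1, h2⟩; exact ⟨by linarith, by linarith⟩
    · rintro ⟨h1, h2⟩; exact ⟨by linarith, by linarith⟩
  have hEeq : ∀ ar : ℝ, {x : ℝ | ar - ε' ≤ |x| ∧ |x| < ar - ε} = Eset (ar - ε') (ε' - ε) := by
    intro ar
    unfold Eset
    rw [show (ar - ε') + (ε' - ε) = ar - ε by ring]
  have hFFtop : ∀ j, Δ j = ⊤ → FF j = 0 := by
    intro j hj
    have h1 : ∀ t : ℝ, {x : ℝ | ((|x| + t : ℝ) : EReal) < Δ j} = Set.univ := by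
      intro t; rw [hj]; exact Set.eq_univ_of_forall (fun x => EReal.coe_lt_top _)
    simp only [hFF]
    rw [h1 ε, h1 ε', Set.diff_self]
    simp
  have hFF0 : FF 0 = 0 := by
    have h1 : {x : ℝ | ((|x| + ε : ℝ) : EReal) < Δ 0} = ∅ := by
      rw [h0]; ext x
      simp only [Set.mem_setOf_eq, Set.mem_empty_iff_false, iff_false, not_lt]
      exact_mod_cast add_nonneg (abs_nonneg x) hε0
    simp only [hFF]
    rw [h1, Set.empty_diff]
    simp
  have hFFle : ∀ j, FF j ≤ M := by
    intro j
    by_cases hjt : Δ j = ⊤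
    · rw [hFFtop j hjt]; exact hM0
    by_cases hjb : Δ j = ⊥
    · have h1 : {x : ℝ | ((|x| + ε : ℝ) : EReal) < Δ j} = ∅ := by
        rw [hjb]; ext x; simp
      simp only [hFF]
      rw [h1, Set.empty_diff]
      simpa using hM0
    · have hco : (((Δ j).toReal : ℝ) : EReal) = Δ j := EReal.coe_toReal hjt hjb
      set ar := (Δ j).toReal with har
      simp only [hFF]
      refine ENNReal.toReal_le_of_le_ofReal hM0 ?_
      rw [← hco, hreal ar]
      rcases le_or_gt ar ε' with hcase | hcase
      · refine le_trans (measure_mono ?_) ((ball_bound hv0 hδ).trans_eq (by rw [hconst]))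
        intro x hx
        exact Set.mem_Ioo.mpr (abs_lt.mp (lt_of_lt_of_le hx.2 (by linarith)))
      · rw [hEeq ar]
        exact (E_bound hv0 (by linarith) hδ).trans_eq (by rw [hconst])
  have hupFF : ∀ j j' : Fin (m + 1), j ≤ j' → Δ j' ≤ ((ε' : ℝ) : EReal) → FF j ≤ FF j' := by
    intro j j' hjj hj'
    refine ENNReal.toReal_mono (measure_ne_top _ _) (measure_mono ?_)
    rintro x ⟨hx1, hx2⟩
    refine ⟨lt_of_lt_of_le hx1 (hmono hjj), fun hcon => ?_⟩
    exact (not_lt.mpr (hj'.trans (EReal.coe_le_coe_iff.mpr (by linarith [abs_nonneg x])))) hcon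
  have hdownFF : ∀ j j' : Fin (m + 1), j ≤ j' → ((ε' : ℝ) : EReal) < Δ j → FF j' ≤ FF j := by
    intro j j' hjj hj
    by_cases hj't : Δ j' = ⊤
    · rw [hFFtop j' hj't]; exact ENNReal.toReal_nonneg
    · have hjt : Δ j ≠ ⊤ := fun h => hj't (top_le_iff.mp (h ▸ hmono hjj))
      have hjb : Δ j ≠ ⊥ := fun h => (not_lt_bot (h ▸ hj))
      have hj'b : Δ j' ≠ ⊥ := fun h => hjb (le_bot_iff.mp (h ▸ hmono hjj))
      have hca : (((Δ j).toReal : ℝ) : EReal) = Δ j := EReal.coe_toReal hjt hjb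
      have hcb : (((Δ j').toReal : ℝ) : EReal) = Δ j' := EReal.coe_toReal hj't hj'b
      set a := (Δ j).toReal with ha
      set b := (Δ j').toReal with hb
      have hε'a : ε' < a := EReal.coe_lt_coe_iff.mp (by rw [hca]; exact hj)
      have hab : a ≤ b := EReal.coe_le_coe_iff.mp (by rw [hca, hcb]; exact hmono hjj)
      simp only [hFF]
      rw [← hca, ← hcb, hreal a, hreal b, hEeq a, hEeq b]
      exact ENNReal.toReal_mono (measure_ne_top _ _)
        (E_mono hv0 (by linarith) (by linarith) hδ)
  have hT0 : Δ 0 ≤ ((ε' : ℝ) : EReal) := by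
    rw [h0]; exact_mod_cast hε'0
  let T : Finset (Fin (m + 1)) := Finset.univ.filter (fun j => Δ j ≤ ((ε' : ℝ) : EReal))
  have hTne : T.Nonempty := ⟨0, Finset.mem_filter.mpr ⟨Finset.mem_univ _, hT0⟩⟩
  set k := T.max' hTne with hk
  have hkmem := T.max'_mem hTne
  simp only [T, Finset.mem_filter] at hkmem
  have hk1 : Δ k ≤ ((ε' : ℝ) : EReal) := hkmem.2
  have hkmax : ∀ j : Fin (m + 1), Δ j ≤ ((ε' : ℝ) : EReal) → j ≤ k := fun j hj =>
    T.le_max' j (by simp only [T, Finset.mem_filter]; exact ⟨Finset.mem_univ _, hj⟩)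
  have hle : ∀ (x y : Fin (m + 1)), (x : ℕ) ≤ (y : ℕ) → x ≤ y := fun x y h => Fin.le_def.mpr h
  have hkm : (k : ℕ) < m := by
    by_contra hcon
    have hkl : k = Fin.last m := by
      apply Fin.ext
      have := k.isLt
      simp only [Fin.val_last]
      omega
    rw [hkl, htop] at hk1
    exact (EReal.coe_lt_top ε').not_ge hk1
  set G : ℕ → ℝ := fun n => FF ⟨min n m, by omega⟩ with hG
  have hGn : ∀ n, n ≤ m → ∀ (h : n < m + 1), G n = FF ⟨n, h⟩ := by
    intro n hn h
    simp only [hG]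
    exact congrArg FF (Fin.ext (by simp [min_eq_left hn]))
  have hG0 : G 0 = 0 := by
    rw [hGn 0 (by omega) (by omega)]
    rw [show (⟨0, by omega⟩ : Fin (m + 1)) = 0 from Fin.ext (by simp)]
    exact hFF0
  have hGm : G m = 0 := by
    rw [hGn m le_rfl (by omega)]
    rw [show (⟨m, by omega⟩ : Fin (m + 1)) = Fin.last m from Fin.ext (by simp [Fin.val_last])]
    exact hFFtop _ htop
  have hup : ∀ n, n < (k : ℕ) → G n ≤ G (n + 1) := by
    intro n hn
    have hk2 : (k : ℕ) ≤ m := by omega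
    rw [hGn n (by omega) (by omega), hGn (n + 1) (by omega) (by omega)]
    refine hupFF _ _ (hle _ _ (show n ≤ n + 1 by omega)) ?_
    refine le_trans (hmono (hle (⟨n + 1, by omega⟩ : Fin (m + 1)) k (show n + 1 ≤ (k : ℕ) by omega))) hk1
  have hdown : ∀ n, (k : ℕ) < n → n < m → G (n + 1) ≤ G n := by
    intro n hn1 hn2
    rw [hGn n (by omega) (by omega), hGn (n + 1) (by omega) (by omega)]
    refine hdownFF _ _ (hle _ _ (show n ≤ n + 1 by omega)) ?_
    refine not_le.mp (fun hcon => ?_)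
    have h3 := hkmax ⟨n, by omega⟩ hcon
    rw [Fin.le_def] at h3
    simp only [Fin.val_mk] at h3
    omega
  have hMk : G (k : ℕ) ≤ M := by
    rw [hGn (k : ℕ) (by omega) (by omega)]
    exact hFFle _
  have hMk1 : G ((k : ℕ) + 1) ≤ M := by
    rw [hGn ((k : ℕ) + 1) (by omega) (by omega)]
    exact hFFle _
  have hsum : ∑ i : Fin m,
      |(μ {x : ℝ | Δ i.castSucc ≤ ((|x| + ε : ℝ) : EReal) ∧
          ((|x| + ε : ℝ) : EReal) < Δ i.succ}).toReal -
        (μ {x : ℝ | Δ i.castSucc ≤ ((|x| + ε' : ℝ) : EReal) ∧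
          ((|x| + ε' : ℝ) : EReal) < Δ i.succ}).toReal|
      = ∑ n ∈ Finset.range m, |G (n + 1) - G n| := by
    rw [← Fin.sum_univ_eq_sum_range (fun n => |G (n + 1) - G n|) m]
    refine Finset.sum_congr rfl (fun i _ => ?_)
    rw [hterm i, hGn (i.1 + 1) (by omega) (by omega), hGn i.1 (by omega) (by omega)]
    rfl
  rw [hsum]
  exact sum_abs_tele G m (k : ℕ) hkm M hG0 hGm hup hdown hMk hMk1

end HNTV

/-- Proposition 1: total variation bound for the distribution over intervals of a
half-normal random variable `W = |X|`, `X ~ N(0,σ²)`, under shifts `ε, ε' ∈ [0,1]`. -/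
theorem halfnormal_interval_tv_bound (σ : ℝ) (hσ : 0 < σ) (m : ℕ) (hm : 1 ≤ m)
    (Δ : Fin (m + 1) → EReal) (hmono : Monotone Δ)
    (h0 : Δ 0 = 0) (htop : Δ (Fin.last m) = ⊤)
    (v : NNReal) (hv : (v : ℝ) = σ ^ 2)
    (p : ℝ → Fin m → ℝ)
    (hp : ∀ (ε : ℝ) (i : Fin m), p ε i =
      ((gaussianReal 0 v) {x : ℝ | Δ i.castSucc ≤ ((|x| + ε : ℝ) : EReal) ∧
        ((|x| + ε : ℝ) : EReal) < Δ i.succ}).toReal)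
    (ε ε' : ℝ) (hε : ε ∈ Set.Icc (0 : ℝ) 1) (hε' : ε' ∈ Set.Icc (0 : ℝ) 1) :
    ∑ i : Fin m, |p ε i - p ε' i| ≤ 2 * Real.sqrt 2 / (σ * Real.sqrt π) * |ε - ε'| := by
  rcases le_total ε ε' with h | h
  · have H := HNTV.aux σ hσ m Δ hmono h0 htop v hv ε ε' hε.1 h
    calc ∑ i : Fin m, |p ε i - p ε' i|
        = ∑ i : Fin m,
          |((gaussianReal 0 v) {x : ℝ | Δ i.castSucc ≤ ((|x| + ε : ℝ) : EReal) ∧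
              ((|x| + ε : ℝ) : EReal) < Δ i.succ}).toReal -
            ((gaussianReal 0 v) {x : ℝ | Δ i.castSucc ≤ ((|x| + ε' : ℝ) : EReal) ∧
              ((|x| + ε' : ℝ) : EReal) < Δ i.succ}).toReal| := by
          refine Finset.sum_congr rfl (fun i _ => ?_); rw [hp, hp]
      _ ≤ 2 * (Real.sqrt 2 / (σ * Real.sqrt π) * (ε' - ε)) := H
      _ = 2 * Real.sqrt 2 / (σ * Real.sqrt π) * |ε - ε'| := by
          rw [abs_sub_comm, abs_of_nonneg (by linarith : (0:ℝ) ≤ ε' - ε)]; ring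
  · have H := HNTV.aux σ hσ m Δ hmono h0 htop v hv ε' ε hε'.1 h
    calc ∑ i : Fin m, |p ε i - p ε' i|
        = ∑ i : Fin m,
          |((gaussianReal 0 v) {x : ℝ | Δ i.castSucc ≤ ((|x| + ε' : ℝ) : EReal) ∧
              ((|x| + ε' : ℝ) : EReal) < Δ i.succ}).toReal -
            ((gaussianReal 0 v) {x : ℝ | Δ i.castSucc ≤ ((|x| + ε : ℝ) : EReal) ∧
              ((|x| + ε : ℝ) : EReal) < Δ i.succ}).toReal| := by
          refine Finset.sum_congr rfl (fun i _ => ?_); rw [hp, hp, abs_sub_comm]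
      _ ≤ 2 * (Real.sqrt 2 / (σ * Real.sqrt π) * (ε - ε')) := H
      _ = 2 * Real.sqrt 2 / (σ * Real.sqrt π) * |ε - ε'| := by
          rw [abs_of_nonneg (by linarith : (0:ℝ) ≤ ε - ε')]; ring
end

section
/- Let p : [0,1] → ℝ be L-Lipschitz, let ε* ∈ [0,1] maximize p over [0,1], and let I, I* ⊆ [0,1] be intervals of length l with midpoints ε_I and ε_{I*}, where ε* ∈ I*. Suppose estimates p̂(ε_I), p̂(ε_{I*}) satisfy |p̂(ε_I) − p(ε_I)| ≤ l and |p̂(ε_{I*}) − p(ε_{I*})| ≤ l. Then p̂(ε_I) − p̂(ε_{I*}) ≤ (2 + L/2)·l. -/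
/-- The interval containing the optimal arm is never eliminated: under the clean
event, the elimination rule cannot be triggered against the optimal interval. -/
theorem optimal_interval_not_eliminated
    (L l : ℝ) (hL : 0 ≤ L) (hl : 0 < l)
    (p : ℝ → ℝ)
    (hlip : ∀ x ∈ Set.Icc (0 : ℝ) 1, ∀ y ∈ Set.Icc (0 : ℝ) 1, |p x - p y| ≤ L * |x - y|)
    (εstar : ℝ) (hεstar : εstar ∈ Set.Icc (0 : ℝ) 1)
    (hopt : ∀ ε ∈ Set.Icc (0 : ℝ) 1, p ε ≤ p εstar)
    (εI εIstar : ℝ)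
    (hI : Set.Icc (εI - l / 2) (εI + l / 2) ⊆ Set.Icc (0 : ℝ) 1)
    (hIstar : Set.Icc (εIstar - l / 2) (εIstar + l / 2) ⊆ Set.Icc (0 : ℝ) 1)
    (hmem : εstar ∈ Set.Icc (εIstar - l / 2) (εIstar + l / 2))
    (phatI phatIstar : ℝ)
    (hestI : |phatI - p εI| ≤ l) (hestIstar : |phatIstar - p εIstar| ≤ l) :
    phatI - phatIstar ≤ (2 + L / 2) * l := by
  have hεI : εI ∈ Set.Icc (0 : ℝ) 1 := hI ⟨by linarith, by linarith⟩
  have hεIstar : εIstar ∈ Set.Icc (0 : ℝ) 1 := hIstar ⟨by linarith, by linarith⟩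
  have h1 : p εI ≤ p εstar := hopt εI hεI
  have h2 : |p εstar - p εIstar| ≤ L * |εstar - εIstar| :=
    hlip εstar hεstar εIstar hεIstar
  have h3 : |εstar - εIstar| ≤ l / 2 := by
    rw [abs_le]; obtain ⟨a, b⟩ := hmem; constructor <;> linarith
  have h4 : L * |εstar - εIstar| ≤ L * (l / 2) := by
    exact mul_le_mul_of_nonneg_left h3 hL
  have h5 := abs_le.mp hestI
  have h6 := abs_le.mp hestIstar
  have h7 := abs_le.mp h2
  nlinarith
end

section
/- Let p : [0,1] → ℝ be L-Lipschitz with maximizer ε* ∈ [0,1]. Let I, I* ⊆ [0,1] be intervals of length l with midpoints ε_I, ε_{I*}, with ε* ∈ I*. Suppose |p̂(ε_I) − p(ε_I)| ≤ l, |p̂(ε_{I*}) − p(ε_{I*})| ≤ l, and p̂(ε_{I*}) − p̂(ε_I) ≤ (2 + L/2)·l (the interval I is not eliminated). Then for every ε ∈ I, p(ε*) − p(ε) ≤ (4 + 3L/2)·l. -/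
/-- Optimality-gap bound for arms in non-eliminated intervals of the zooming
algorithm. -/
theorem non_eliminated_optimality_gap
    (L l : ℝ) (hL : 0 ≤ L) (hl : 0 < l)
    (p : ℝ → ℝ)
    (hlip : ∀ x ∈ Set.Icc (0 : ℝ) 1, ∀ y ∈ Set.Icc (0 : ℝ) 1, |p x - p y| ≤ L * |x - y|)
    (εstar : ℝ) (hεstar : εstar ∈ Set.Icc (0 : ℝ) 1)
    (hopt : ∀ ε ∈ Set.Icc (0 : ℝ) 1, p ε ≤ p εstar)
    (εI εIstar : ℝ)
    (hI : Set.Icc (εI - l / 2) (εI + l / 2) ⊆ Set.Icc (0 : ℝ) 1)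
    (hIstar : Set.Icc (εIstar - l / 2) (εIstar + l / 2) ⊆ Set.Icc (0 : ℝ) 1)
    (hmem : εstar ∈ Set.Icc (εIstar - l / 2) (εIstar + l / 2))
    (phatI phatIstar : ℝ)
    (hestI : |phatI - p εI| ≤ l) (hestIstar : |phatIstar - p εIstar| ≤ l)
    (hnotelim : phatIstar - phatI ≤ (2 + L / 2) * l) :
    ∀ ε ∈ Set.Icc (εI - l / 2) (εI + l / 2), p εstar - p ε ≤ (4 + 3 * L / 2) * l := by
  intro ε hε
  have hεmem : ε ∈ Set.Icc (0 : ℝ) 1 := hI hε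
  have hεImem : εI ∈ Set.Icc (0 : ℝ) 1 := by
    apply hI; constructor <;> simp <;> linarith
  have hεIstarmem : εIstar ∈ Set.Icc (0 : ℝ) 1 := by
    apply hIstar; constructor <;> simp <;> linarith
  have h1 : |p εstar - p εIstar| ≤ L * |εstar - εIstar| := hlip _ hεstar _ hεIstarmem
  have h2 : |p εI - p ε| ≤ L * |εI - ε| := hlip _ hεImem _ hεmem
  have hd1 : |εstar - εIstar| ≤ l / 2 := by
    rw [abs_le]; obtain ⟨a, b⟩ := hmem; constructor <;> linarith
  have hd2 : |εI - ε| ≤ l / 2 := by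
    rw [abs_le]; obtain ⟨a, b⟩ := hε; constructor <;> linarith
  have e1 := abs_le.mp hestI
  have e2 := abs_le.mp hestIstar
  have a1 := abs_le.mp h1
  have a2 := abs_le.mp h2
  have hL1 : L * |εstar - εIstar| ≤ L * (l / 2) := by
    apply mul_le_mul_of_nonneg_left hd1 hL
  have hL2 : L * |εI - ε| ≤ L * (l / 2) := by
    apply mul_le_mul_of_nonneg_left hd2 hL
  nlinarith
end
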